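/- Let A = M − N be a splitting of A ∈ ℝ^{n×n}, let B ∈ ℝ^{n×n}, b ∈ ℝⁿ, θ ∈ [0,1), and let Ω ∈ ℝ^{n×n} be such that Ω + M is invertible. Suppose F(x*) = 0 and let {x^k} be any sequence in ℝⁿ satisfying ‖(Ω+M)x^{k+1} − [(Ω+N)x^k + B|x^k| + b]‖ ≤ θ‖F(x^k)‖ for all k ≥ 0. Then ‖x^{k+1} − x*‖ ≤ ‖(Ω+M)^{-1}‖·[θ(‖Ω+M‖ + ‖Ω+N‖ + ‖B‖) + ‖Ω+N‖ + ‖B‖]·‖x^k − x*‖ for all k ≥ 0. Moreover, if ‖(Ω+M)^{-1}‖ < 1/[θ(‖Ω+M‖ + ‖Ω+N‖ + ‖B‖) + ‖Ω+N‖ + ‖B‖], then {x^k} converges linearly to x* from any starting point x^0. -/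

import Mathlib

open Matrix Filter

/-- Componentwise absolute value of a vector in Euclidean space. -/
noncomputable def vabs {n : ℕ} (x : EuclideanSpace ℝ (Fin n)) : EuclideanSpace ℝ (Fin n) :=
  WithLp.toLp 2 (fun i => |x i|)

/-- A matrix acting on Euclidean space (so that vector norms are the Euclidean 2-norm). -/
noncomputable def mulV {n : ℕ} (M : Matrix (Fin n) (Fin n) ℝ) (x : EuclideanSpace ℝ (Fin n)) :
    EuclideanSpace ℝ (Fin n) :=
  Matrix.toEuclideanCLM (𝕜 := ℝ) M x

/-- Spectral norm of a real matrix: the operator norm induced by the Euclidean vector norm. -/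
noncomputable def spec {n : ℕ} (M : Matrix (Fin n) (Fin n) ℝ) : ℝ :=
  ‖Matrix.toEuclideanCLM (𝕜 := ℝ) M‖

/-- The GAVE residual function `F(x) = A x − B |x| − b`. -/
noncomputable def gaveF {n : ℕ} (A B : Matrix (Fin n) (Fin n) ℝ)
    (b : EuclideanSpace ℝ (Fin n)) (x : EuclideanSpace ℝ (Fin n)) : EuclideanSpace ℝ (Fin n) :=
  mulV A x - mulV B (vabs x) - b

/-- The AVE residual function `A x − |x| − b` (the GAVE with `B = I`). -/
noncomputable def aveF {n : ℕ} (A : Matrix (Fin n) (Fin n) ℝ)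
    (b : EuclideanSpace ℝ (Fin n)) (x : EuclideanSpace ℝ (Fin n)) : EuclideanSpace ℝ (Fin n) :=
  mulV A x - vabs x - b

/-- A sequence converges linearly to `xs`: the distances to `xs` contract by a fixed
factor `c < 1` at every step, and the sequence tends to `xs`. -/
def ConvergesLinearlyTo {n : ℕ} (x : ℕ → EuclideanSpace ℝ (Fin n))
    (xs : EuclideanSpace ℝ (Fin n)) : Prop :=
  (∃ c : ℝ, 0 ≤ c ∧ c < 1 ∧ ∀ k : ℕ, ‖x (k + 1) - xs‖ ≤ c * ‖x k - xs‖) ∧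
    Tendsto x atTop (nhds xs)

lemma mulV_add_left {n : ℕ} (P Q : Matrix (Fin n) (Fin n) ℝ) (x : EuclideanSpace ℝ (Fin n)) :
    mulV (P + Q) x = mulV P x + mulV Q x := by
  simp [mulV, map_add, ContinuousLinearMap.add_apply]

lemma mulV_sub_vec {n : ℕ} (P : Matrix (Fin n) (Fin n) ℝ) (x y : EuclideanSpace ℝ (Fin n)) :
    mulV P (x - y) = mulV P x - mulV P y := by
  simp [mulV, map_sub]

lemma mulV_norm_le {n : ℕ} (P : Matrix (Fin n) (Fin n) ℝ) (x : EuclideanSpace ℝ (Fin n)) :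
    ‖mulV P x‖ ≤ spec P * ‖x‖ :=
  (Matrix.toEuclideanCLM (𝕜 := ℝ) P).le_opNorm x

lemma mulV_inv {n : ℕ} (E : Matrix (Fin n) (Fin n) ℝ) (h : IsUnit E)
    (x : EuclideanSpace ℝ (Fin n)) : mulV E⁻¹ (mulV E x) = x := by
  have hdet : IsUnit E.det := (Matrix.isUnit_iff_isUnit_det E).mp h
  have h1 : E⁻¹ * E = 1 := Matrix.nonsing_inv_mul E hdet
  have : mulV E⁻¹ (mulV E x) = mulV (E⁻¹ * E) x := by
    simp [mulV, _root_.map_mul, ContinuousLinearMap.mul_apply]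
  rw [this, h1]
  simp [mulV, _root_.map_one]

lemma vabs_lip {n : ℕ} (x y : EuclideanSpace ℝ (Fin n)) : ‖vabs x - vabs y‖ ≤ ‖x - y‖ := by
  rw [EuclideanSpace.norm_eq, EuclideanSpace.norm_eq]
  apply Real.sqrt_le_sqrt
  apply Finset.sum_le_sum
  intro i _
  have h : |(vabs x - vabs y) i| ≤ |(x - y) i| := by
    simp only [vabs, PiLp.sub_apply]
    calc |(|x i| - |y i|)| ≤ |x i - y i| := abs_abs_sub_abs_le_abs_sub _ _
    _ = |(x - y) i| := by simp
  calc |(vabs x - vabs y) i| ^ 2 ≤ |(x - y) i| ^ 2 := by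
        exact pow_le_pow_left₀ (abs_nonneg _) h 2

lemma mulV_sub_left {n : ℕ} (P Q : Matrix (Fin n) (Fin n) ℝ) (x : EuclideanSpace ℝ (Fin n)) :
    mulV (P - Q) x = mulV P x - mulV Q x := by
  simp [mulV, map_sub]

lemma spec_nonneg {n : ℕ} (P : Matrix (Fin n) (Fin n) ℝ) : 0 ≤ spec P := norm_nonneg _

theorem stmt2 {n : ℕ} (A M N B Ω : Matrix (Fin n) (Fin n) ℝ)
    (b : EuclideanSpace ℝ (Fin n)) (hA : A = M - N) (θ : ℝ) (hθ0 : 0 ≤ θ) (hθ1 : θ < 1)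
    (hinv : IsUnit (Ω + M))
    (xs : EuclideanSpace ℝ (Fin n)) (hxs : gaveF A B b xs = 0)
    (x : ℕ → EuclideanSpace ℝ (Fin n))
    (hx : ∀ k : ℕ, ‖mulV (Ω + M) (x (k + 1)) - (mulV (Ω + N) (x k) + mulV B (vabs (x k)) + b)‖ ≤
      θ * ‖gaveF A B b (x k)‖) :
    (∀ k : ℕ, ‖x (k + 1) - xs‖ ≤ spec (Ω + M)⁻¹ *
        (θ * (spec (Ω + M) + spec (Ω + N) + spec B) + spec (Ω + N) + spec B) * ‖x k - xs‖) ∧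
      (spec (Ω + M)⁻¹ <
          1 / (θ * (spec (Ω + M) + spec (Ω + N) + spec B) + spec (Ω + N) + spec B) →
        ConvergesLinearlyTo x xs) := by
  set E := Ω + M with hE
  set G := Ω + N with hG
  set d : ℝ := θ * (spec E + spec G + spec B) + spec G + spec B with hd
  have hd0 : 0 ≤ d := by
    have := spec_nonneg E; have := spec_nonneg G; have := spec_nonneg B
    have : 0 ≤ θ * (spec E + spec G + spec B) := by positivity
    nlinarith [spec_nonneg G, spec_nonneg B]
  have hEG : E - G = A := by rw [hA, hE, hG]; abel
  have hmA : ∀ y : EuclideanSpace ℝ (Fin n), mulV A y = mulV E y - mulV G y := by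
    intro y; rw [← hEG, mulV_sub_left]
  have hxs' : mulV E xs = mulV G xs + mulV B (vabs xs) + b := by
    have h0 : mulV A xs - mulV B (vabs xs) - b = 0 := hxs
    rw [hmA xs] at h0
    have := sub_eq_zero.mp (by rw [sub_sub] at h0; exact h0)
    linear_combination (norm := module) this
  have key : ∀ k, ‖x (k + 1) - xs‖ ≤ spec E⁻¹ * d * ‖x k - xs‖ := by
    intro k
    have h1 : x (k + 1) - xs = mulV E⁻¹ (mulV E (x (k + 1) - xs)) := (mulV_inv E hinv _).symm
    have h2 : mulV E (x (k + 1) - xs) =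
        (mulV E (x (k + 1)) - (mulV G (x k) + mulV B (vabs (x k)) + b))
          + (mulV G (x k - xs) + mulV B (vabs (x k) - vabs xs)) := by
      rw [mulV_sub_vec, mulV_sub_vec, mulV_sub_vec, hxs']; abel
    have hvlip : ‖vabs (x k) - vabs xs‖ ≤ ‖x k - xs‖ := vabs_lip _ _
    have hBb : ‖mulV B (vabs (x k) - vabs xs)‖ ≤ spec B * ‖x k - xs‖ :=
      le_trans (mulV_norm_le _ _) (mul_le_mul_of_nonneg_left hvlip (spec_nonneg B))
    have hF : ‖gaveF A B b (x k)‖ ≤ (spec E + spec G + spec B) * ‖x k - xs‖ := by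
      have heq : gaveF A B b (x k) =
          (mulV E (x k - xs) - mulV G (x k - xs)) - mulV B (vabs (x k) - vabs xs) := by
        show mulV A (x k) - mulV B (vabs (x k)) - b = _
        rw [hmA, mulV_sub_vec, mulV_sub_vec, mulV_sub_vec, hxs']; abel
      rw [heq]
      calc ‖(mulV E (x k - xs) - mulV G (x k - xs)) - mulV B (vabs (x k) - vabs xs)‖
          ≤ ‖mulV E (x k - xs) - mulV G (x k - xs)‖ + ‖mulV B (vabs (x k) - vabs xs)‖ :=
            norm_sub_le _ _
        _ ≤ (‖mulV E (x k - xs)‖ + ‖mulV G (x k - xs)‖) + ‖mulV B (vabs (x k) - vabs xs)‖ := by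
            gcongr; exact norm_sub_le _ _
        _ ≤ (spec E * ‖x k - xs‖ + spec G * ‖x k - xs‖) + spec B * ‖x k - xs‖ := by
            gcongr <;> first | exact mulV_norm_le _ _ | exact hBb
        _ = (spec E + spec G + spec B) * ‖x k - xs‖ := by ring
    calc ‖x (k + 1) - xs‖ = ‖mulV E⁻¹ (mulV E (x (k + 1) - xs))‖ := by rw [← h1]
      _ ≤ spec E⁻¹ * ‖mulV E (x (k + 1) - xs)‖ := mulV_norm_le _ _
      _ ≤ spec E⁻¹ * ((θ * ‖gaveF A B b (x k)‖) +
            (‖mulV G (x k - xs)‖ + ‖mulV B (vabs (x k) - vabs xs)‖)) := by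
          apply mul_le_mul_of_nonneg_left _ (spec_nonneg _)
          rw [h2]
          exact le_trans (norm_add_le _ _)
            (add_le_add (hx k) (norm_add_le _ _))
      _ ≤ spec E⁻¹ * ((θ * ((spec E + spec G + spec B) * ‖x k - xs‖)) +
            (spec G * ‖x k - xs‖ + spec B * ‖x k - xs‖)) := by
          apply mul_le_mul_of_nonneg_left _ (spec_nonneg _)
          gcongr
          (first | exact hF | exact hBb | exact mulV_norm_le _ _)
      _ = spec E⁻¹ * d * ‖x k - xs‖ := by rw [hd]; ring
  refine ⟨key, fun hlt => ?_⟩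
  have hdpos : 0 < d := by
    rcases lt_or_eq_of_le hd0 with h | h
    · exact h
    · exfalso; rw [← h] at hlt; simp at hlt; exact absurd hlt (not_lt.mpr (spec_nonneg _))
  set c : ℝ := spec E⁻¹ * d with hc
  have hc0 : 0 ≤ c := mul_nonneg (spec_nonneg _) hd0
  have hc1 : c < 1 := by
    rw [hc]
    calc spec E⁻¹ * d < (1 / d) * d := by
          exact mul_lt_mul_of_pos_right hlt hdpos
      _ = 1 := by field_simp
  refine ⟨⟨c, hc0, hc1, key⟩, ?_⟩
  have hbd : ∀ k, ‖x k - xs‖ ≤ c ^ k * ‖x 0 - xs‖ := by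
    intro k
    induction k with
    | zero => simp
    | succ m ih =>
        calc ‖x (m + 1) - xs‖ ≤ c * ‖x m - xs‖ := key m
          _ ≤ c * (c ^ m * ‖x 0 - xs‖) := mul_le_mul_of_nonneg_left ih hc0
          _ = c ^ (m + 1) * ‖x 0 - xs‖ := by ring
  rw [tendsto_iff_norm_sub_tendsto_zero]
  apply squeeze_zero (fun k => norm_nonneg _) hbd
  have : Tendsto (fun k : ℕ => c ^ k * ‖x 0 - xs‖) atTop (nhds (0 * ‖x 0 - xs‖)) :=
    (tendsto_pow_atTop_nhds_zero_of_lt_one hc0 hc1).mul_const _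
  simpa using this
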